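/- arXiv:1506.04781 — 4 statements merged into one kernel-verified Lean document; each statement's English description precedes it below -/
import Mathlib

section
/- Let s0, s1 ∈ ℂ with |s0| = |s1| and s0 + s1 ≠ 0. Then Γ_{s0,s1} = {s ∈ ℂ : Re(s · conj(s0 + s1)) = 0} = i·ℝ·(s0+s1), i.e. the curve is the straight line through the origin orthogonal to s0 + s1. -/
def Gamma (a b : ℂ) : Set ℂ :=
  {s : ℂ | ‖s - a‖ * ‖s - b‖ =
           ‖s + a‖ * ‖s + b‖}

theorem stmt_3 (s0 s1 : ℂ) (habs : ‖s0‖ = ‖s1‖)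
    (hsum : s0 + s1 ≠ 0) :
    Gamma s0 s1 = {s : ℂ | (s * starRingEnd ℂ (s0 + s1)).re = 0} ∧
    Gamma s0 s1 = {s : ℂ | ∃ t : ℝ, s = Complex.I * (t : ℂ) * (s0 + s1)} := by
  have hns : Complex.normSq s0 = Complex.normSq s1 := by
    rw [← Complex.sq_norm, ← Complex.sq_norm, habs]
  have h1 : Gamma s0 s1 = {s : ℂ | (s * starRingEnd ℂ (s0 + s1)).re = 0} := by
    ext s
    simp only [Gamma, Set.mem_setOf_eq]
    have hsq : ‖s - s0‖ * ‖s - s1‖ =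
        ‖s + s0‖ * ‖s + s1‖ ↔
        (‖s - s0‖ * ‖s - s1‖)^2 =
        (‖s + s0‖ * ‖s + s1‖)^2 := by
      constructor
      · intro h; rw [h]
      · intro h
        nlinarith [h, mul_nonneg (norm_nonneg (s - s0)) (norm_nonneg (s - s1)),
          mul_nonneg (norm_nonneg (s + s0)) (norm_nonneg (s + s1))]
    rw [hsq]
    have hrw : ∀ u v : ℂ, (‖u‖ * ‖v‖)^2 =
        Complex.normSq u * Complex.normSq v := by
      intro u v
      rw [mul_pow, Complex.sq_norm, Complex.sq_norm]
    rw [hrw, hrw]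
    have key : Complex.normSq (s - s0) * Complex.normSq (s - s1) -
        Complex.normSq (s + s0) * Complex.normSq (s + s1) =
        -4 * (Complex.normSq s + Complex.normSq s0) *
          (s * starRingEnd ℂ (s0 + s1)).re := by
      simp only [Complex.normSq_apply, Complex.mul_re, Complex.add_re,
        Complex.add_im, Complex.sub_re, Complex.sub_im, Complex.conj_re,
        Complex.conj_im]
      have h2 : s0.re^2 + s0.im^2 = s1.re^2 + s1.im^2 := by
        have := hns
        simp only [Complex.normSq_apply] at this
        nlinarith [this]
      nlinarith [h2]
    have hpos : 0 < Complex.normSq s + Complex.normSq s0 := by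
      rcases eq_or_ne s0 0 with h0 | h0
      · exfalso
        apply hsum
        have : s1 = 0 := by
          have := habs
          rw [h0, norm_zero] at this
          exact (norm_eq_zero.mp this.symm)
        rw [h0, this, add_zero]
      · have := Complex.normSq_pos.mpr h0
        linarith [Complex.normSq_nonneg s]
    constructor
    · intro h
      have : (-4 * (Complex.normSq s + Complex.normSq s0)) *
          (s * starRingEnd ℂ (s0 + s1)).re = 0 := by linarith [key]
      rcases mul_eq_zero.mp this with h' | h'
      · exfalso; nlinarith
      · exact h'
    · intro h
      have := key
      rw [h] at this
      linarith
  refine ⟨h1, ?_⟩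
  rw [h1]
  ext s
  simp only [Set.mem_setOf_eq]
  constructor
  · intro h
    set w := s0 + s1
    refine ⟨(s * starRingEnd ℂ w).im / Complex.normSq w, ?_⟩
    have hw : (Complex.normSq w : ℝ) ≠ 0 := ne_of_gt (Complex.normSq_pos.mpr hsum)
    have hsc : s * starRingEnd ℂ w =
        Complex.I * ((s * starRingEnd ℂ w).im : ℂ) := by
      apply Complex.ext <;> simp [h]
    have ht : s * (Complex.normSq w : ℂ) =
        Complex.I * ((s * starRingEnd ℂ w).im : ℂ) * w := by
      calc s * (Complex.normSq w : ℂ) = s * (starRingEnd ℂ w * w) := by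
            rw [mul_comm (starRingEnd ℂ w) w, Complex.mul_conj]
        _ = (s * starRingEnd ℂ w) * w := by ring
        _ = Complex.I * ((s * starRingEnd ℂ w).im : ℂ) * w := by
            conv_lhs => rw [hsc]
    have hw' : (Complex.normSq w : ℂ) ≠ 0 := by exact_mod_cast hw
    rw [Complex.ofReal_div]
    have hrw : Complex.I * ((((s * starRingEnd ℂ w).im : ℂ)) / (Complex.normSq w : ℂ)) * w =
        (Complex.I * ((s * starRingEnd ℂ w).im : ℂ) * w) / (Complex.normSq w : ℂ) := by ring
    rw [hrw, ← ht, mul_div_assoc, div_self hw', mul_one]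
  · rintro ⟨t, rfl⟩
    simp [Complex.mul_re, Complex.mul_im]
    ring
end

section
/- Let s0 ∈ ℂ with Re(s0) ≠ 0. Then Γ_{s0, conj(s0)} = i·ℝ, i.e. the curve determined by the pair (s0, conj(s0)) is exactly the imaginary axis. -/
theorem stmt_4 (s0 : ℂ) (h : s0.re ≠ 0) :
    Gamma s0 (starRingEnd ℂ s0) = {s : ℂ | s.re = 0} := by
  ext s
  simp only [Gamma, Set.mem_setOf_eq]
  rw [← norm_mul, ← norm_mul]
  rw [show (‖(s - s0) * (s - starRingEnd ℂ s0)‖ =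
      ‖(s + s0) * (s + starRingEnd ℂ s0)‖) ↔
      Complex.normSq ((s - s0) * (s - starRingEnd ℂ s0)) =
      Complex.normSq ((s + s0) * (s + starRingEnd ℂ s0)) from by
    constructor
    · intro h'; rw [← Complex.sq_norm, ← Complex.sq_norm, h']
    · intro h'
      rw [Complex.norm_def, Complex.norm_def, h']]
  simp only [Complex.normSq_apply, Complex.mul_re, Complex.mul_im, Complex.sub_re,
    Complex.sub_im, Complex.add_re, Complex.add_im, Complex.conj_re, Complex.conj_im]
  constructor
  · intro h'
    have key : 4 * s.re * s0.re *
        ((s.re - s0.re)^2 + (s.re + s0.re)^2 + (s.im - s0.im)^2 + (s.im + s0.im)^2) = 0 := by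
      linear_combination -h'
    have hpos : (s.re - s0.re)^2 + (s.re + s0.re)^2 + (s.im - s0.im)^2 + (s.im + s0.im)^2 > 0 := by
      have := mul_self_pos.2 h
      nlinarith [sq_nonneg (s.im - s0.im), sq_nonneg (s.im + s0.im), sq_nonneg s.re]
    rcases mul_eq_zero.1 key with h4 | h4
    · have : s.re * s0.re = 0 := by linarith
      exact (mul_eq_zero.1 this).resolve_right h
    · exact absurd h4 hpos.ne'
  · intro h'
    rw [h']
    ring
end

section
/- Let s0 = a0 + i·b0 and s1 = a1 + i·b1 be complex numbers satisfying Im(s0 + s1) = b0 + b1 > 0 and |s0|²·b1 + |s1|²·b0 < 0, and set ζ = sqrt(−(|s0|²·b1 + |s1|²·b0)/(b0 + b1)) > 0. Then for every real y (with i·y ∉ {−s0, −s1}): (1) g_{s0,s1}(i·y) < 1 if and only if y ∈ (−ζ, 0) ∪ (ζ, ∞); (2) g_{s0,s1}(i·y) = 1 if and only if y ∈ {0, −ζ, ζ}; (3) g_{s0,s1}(i·y) > 1 if and only if y ∈ (−∞, −ζ) ∪ (0, ζ). -/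
noncomputable def g (s0 s1 s : ℂ) : ℝ :=
  (‖s - s0‖ * ‖s - s1‖) /
    (‖s + s0‖ * ‖s + s1‖)

lemma sign3 (ζ y : ℝ) (hζ : 0 < ζ) :
    (0 < y * (y^2 - ζ^2) ↔ ((-ζ < y ∧ y < 0) ∨ ζ < y)) ∧
    (y * (y^2 - ζ^2) = 0 ↔ (y = 0 ∨ y = -ζ ∨ y = ζ)) ∧
    (y * (y^2 - ζ^2) < 0 ↔ (y < -ζ ∨ (0 < y ∧ y < ζ))) := by
  refine ⟨?_, ?_, ?_⟩
  · constructor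
    · intro h
      rcases lt_trichotomy y 0 with hy | hy | hy
      · refine Or.inl ⟨?_, hy⟩
        by_contra hc; push_neg at hc
        nlinarith [mul_nonneg (mul_nonneg (by linarith : (0:ℝ) ≤ -y)
          (by linarith : (0:ℝ) ≤ ζ - y)) (by linarith : (0:ℝ) ≤ -y - ζ)]
      · exfalso; rw [hy] at h; simp at h
      · refine Or.inr ?_
        by_contra hc; push_neg at hc
        nlinarith [mul_nonneg (mul_nonneg hy.le
          (by linarith : (0:ℝ) ≤ ζ - y)) (by linarith : (0:ℝ) ≤ y + ζ)]
    · rintro (⟨h1, h2⟩ | h)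
      · nlinarith [mul_pos (mul_pos (by linarith : (0:ℝ) < -y)
          (by linarith : (0:ℝ) < ζ - y)) (by linarith : (0:ℝ) < y + ζ)]
      · nlinarith [mul_pos (mul_pos (by linarith : (0:ℝ) < y)
          (by linarith : (0:ℝ) < y - ζ)) (by linarith : (0:ℝ) < y + ζ)]
  · constructor
    · intro h
      rcases mul_eq_zero.mp h with h | h
      · exact Or.inl h
      · have h2 : (y - ζ) * (y + ζ) = 0 := by linear_combination h
        rcases mul_eq_zero.mp h2 with h3 | h3
        · exact Or.inr (Or.inr (by linarith))
        · exact Or.inr (Or.inl (by linarith))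
    · rintro (h | h | h) <;> rw [h] <;> ring
  · constructor
    · intro h
      rcases lt_trichotomy y 0 with hy | hy | hy
      · refine Or.inl ?_
        by_contra hc; push_neg at hc
        nlinarith [mul_nonneg (mul_nonneg (by linarith : (0:ℝ) ≤ -y)
          (by linarith : (0:ℝ) ≤ ζ - y)) (by linarith : (0:ℝ) ≤ y + ζ)]
      · exfalso; rw [hy] at h; simp at h
      · refine Or.inr ⟨hy, ?_⟩
        by_contra hc; push_neg at hc
        nlinarith [mul_nonneg (mul_nonneg hy.le
          (by linarith : (0:ℝ) ≤ y - ζ)) (by linarith : (0:ℝ) ≤ y + ζ)]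
    · rintro (h | ⟨h1, h2⟩)
      · nlinarith [mul_pos (mul_pos (by linarith : (0:ℝ) < -y)
          (by linarith : (0:ℝ) < ζ - y)) (by linarith : (0:ℝ) < -y - ζ)]
      · nlinarith [mul_pos (mul_pos h1
          (by linarith : (0:ℝ) < ζ - y)) (by linarith : (0:ℝ) < y + ζ)]

theorem stmt_5 (s0 s1 : ℂ)
    (hsum : 0 < s0.im + s1.im)
    (hneg : (‖s0‖)^2 * s1.im + (‖s1‖)^2 * s0.im < 0)
    (ζ : ℝ)
    (hζ : ζ = Real.sqrt (-((‖s0‖)^2 * s1.im + (‖s1‖)^2 * s0.im) /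
        (s0.im + s1.im)))
    (y : ℝ) (hy0 : Complex.I * y ≠ -s0) (hy1 : Complex.I * y ≠ -s1) :
    (g s0 s1 (Complex.I * y) < 1 ↔ (y ∈ Set.Ioo (-ζ) 0 ∨ y ∈ Set.Ioi ζ)) ∧
    (g s0 s1 (Complex.I * y) = 1 ↔ (y = 0 ∨ y = -ζ ∨ y = ζ)) ∧
    (1 < g s0 s1 (Complex.I * y) ↔ (y ∈ Set.Iio (-ζ) ∨ y ∈ Set.Ioo 0 ζ)) := by
  have h0 : Complex.I * (y:ℂ) + s0 ≠ 0 := fun h => hy0 (eq_neg_of_add_eq_zero_left h)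
  have h1 : Complex.I * (y:ℂ) + s1 ≠ 0 := fun h => hy1 (eq_neg_of_add_eq_zero_left h)
  set N := ‖Complex.I * (y:ℂ) - s0‖ * ‖Complex.I * (y:ℂ) - s1‖ with hNdef
  set D := ‖Complex.I * (y:ℂ) + s0‖ * ‖Complex.I * (y:ℂ) + s1‖ with hDdef
  have hDpos : 0 < D := mul_pos (norm_pos_iff.mpr h0) (norm_pos_iff.mpr h1)
  have hNnn : 0 ≤ N := mul_nonneg (norm_nonneg _) (norm_nonneg _)
  have harg : 0 < -((‖s0‖)^2 * s1.im + (‖s1‖)^2 * s0.im) / (s0.im + s1.im) :=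
    div_pos (by linarith) hsum
  have hζpos : 0 < ζ := hζ ▸ Real.sqrt_pos.2 harg
  have hζ2 : ζ^2 = -((‖s0‖)^2 * s1.im + (‖s1‖)^2 * s0.im) / (s0.im + s1.im) := by
    rw [hζ]; exact Real.sq_sqrt harg.le
  have h4 : (s0.im + s1.im) * ζ^2 = -((‖s0‖)^2 * s1.im + (‖s1‖)^2 * s0.im) := by
    rw [hζ2]; field_simp
  have key : D^2 - N^2 = 4 * (s0.im + s1.im) * (y * (y^2 - ζ^2)) := by
    have e : D^2 - N^2 = 4 * y * ((s0.im + s1.im) * y^2 +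
        ((‖s0‖)^2 * s1.im + (‖s1‖)^2 * s0.im)) := by
      simp only [hNdef, hDdef, mul_pow, Complex.sq_norm, Complex.normSq_apply,
        Complex.add_re, Complex.add_im, Complex.sub_re, Complex.sub_im,
        Complex.mul_re, Complex.mul_im, Complex.I_re, Complex.I_im,
        Complex.ofReal_re, Complex.ofReal_im]
      ring
    rw [e]; linear_combination (4*y) * h4
  have hg : g s0 s1 (Complex.I * y) = N / D := rfl
  have hfac : (0:ℝ) < 4 * (s0.im + s1.im) := by linarith
  obtain ⟨S1, S2, S3⟩ := sign3 ζ y hζpos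
  have hlt : N < D ↔ 0 < y * (y^2 - ζ^2) := by
    constructor
    · intro h
      have h2 : 0 < 4 * (s0.im + s1.im) * (y * (y^2 - ζ^2)) := by
        rw [← key]; nlinarith
      rcases mul_pos_iff.mp h2 with ⟨_, h3⟩ | ⟨h3, _⟩
      · exact h3
      · linarith
    · intro h
      nlinarith [key, mul_pos hfac h]
  have heq : N = D ↔ y * (y^2 - ζ^2) = 0 := by
    constructor
    · intro h
      have h2 : 4 * (s0.im + s1.im) * (y * (y^2 - ζ^2)) = 0 := by rw [← key, h]; ring
      rcases mul_eq_zero.mp h2 with h3 | h3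
      · exact absurd h3 hfac.ne'
      · exact h3
    · intro h
      have h2 : D^2 - N^2 = 0 := by rw [key, h]; ring
      have h3 : (D - N) * (D + N) = 0 := by linear_combination h2
      rcases mul_eq_zero.mp h3 with h4 | h4
      · linarith
      · linarith
  have hgt : D < N ↔ y * (y^2 - ζ^2) < 0 := by
    constructor
    · intro h
      have h2 : 4 * (s0.im + s1.im) * (y * (y^2 - ζ^2)) < 0 := by
        rw [← key]; nlinarith
      rcases mul_neg_iff.mp h2 with ⟨_, h3⟩ | ⟨h3, _⟩
      · exact h3
      · linarith
    · intro h
      nlinarith [key, mul_neg_of_pos_of_neg hfac h]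
  refine ⟨?_, ?_, ?_⟩
  · rw [hg, div_lt_one hDpos, hlt, S1]
    simp [Set.mem_Ioo, Set.mem_Ioi]
  · rw [hg, div_eq_one_iff_eq hDpos.ne', heq, S2]
  · rw [hg, one_lt_div hDpos, hgt, S3]
    simp [Set.mem_Iio, Set.mem_Ioo]
end

section
/- Let s0, s1 ∈ ℂ and r ∈ ℝ be such that u(r) := r²(s0+s1) + |s0|²·s1 + |s1|²·s0 ≠ 0, and define γ_{s0,s1}(r) = −i·r·u(r)/|u(r)|. Then γ_{s0,s1}(r) ∈ Γ_{s0,s1}, i.e. |γ(r)−s0|·|γ(r)−s1| = |γ(r)+s0|·|γ(r)+s1|. -/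
theorem stmt_6 (s0 s1 : ℂ) (r : ℝ)
    (u : ℂ)
    (hu : u = (r : ℂ)^2 * (s0 + s1) + ((‖s0‖ : ℂ))^2 * s1 +
        ((‖s1‖ : ℂ))^2 * s0)
    (hu0 : u ≠ 0)
    (γ : ℂ) (hγ : γ = -Complex.I * (r : ℂ) * u / (‖u‖ : ℂ)) :
    ‖γ - s0‖ * ‖γ - s1‖ =
      ‖γ + s0‖ * ‖γ + s1‖ := by
  have hc : (‖u‖ : ℂ) ≠ 0 := by
    simpa using (norm_ne_zero_iff.mpr hu0)
  have hmc : u * (starRingEnd ℂ) u = ((‖u‖ : ℂ))^2 := by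
    rw [Complex.mul_conj, ← Complex.ofReal_pow, Complex.sq_norm]
  have h0 : s0 * (starRingEnd ℂ) s0 = ((‖s0‖ : ℂ))^2 := by
    rw [Complex.mul_conj, ← Complex.ofReal_pow, Complex.sq_norm]
  have h1 : s1 * (starRingEnd ℂ) s1 = ((‖s1‖ : ℂ))^2 := by
    rw [Complex.mul_conj, ← Complex.ofReal_pow, Complex.sq_norm]
  -- conj γ
  have hγc : (starRingEnd ℂ) γ = Complex.I * (r : ℂ) * (starRingEnd ℂ) u / (‖u‖ : ℂ) := by
    rw [hγ]; simp [map_div₀, map_mul]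
  have hγγ : γ * (starRingEnd ℂ) γ = (r : ℂ)^2 := by
    rw [hγc, hγ]
    field_simp
    linear_combination (-Complex.I^2*(r:ℂ)^2) * hmc -
      (r:ℂ)^2 * ((‖u‖ : ℂ))^2 * Complex.I_sq
  -- Re(γ conj u) = 0, i.e. γ * conj u + conj γ * u = 0
  have hre : γ * (starRingEnd ℂ) u + (starRingEnd ℂ) γ * u = 0 := by
    rw [hγc, hγ]
    field_simp
    ring
  -- conj u
  have huc : (starRingEnd ℂ) u = (r : ℂ)^2 * ((starRingEnd ℂ) s0 + (starRingEnd ℂ) s1) +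
      ((‖s0‖ : ℂ))^2 * (starRingEnd ℂ) s1 +
      ((‖s1‖ : ℂ))^2 * (starRingEnd ℂ) s0 := by
    rw [hu]; simp [map_mul, map_add, map_pow]
  have hre2 : γ * ((r : ℂ)^2 * ((starRingEnd ℂ) s0 + (starRingEnd ℂ) s1) +
        s0 * (starRingEnd ℂ) s0 * (starRingEnd ℂ) s1 +
        s1 * (starRingEnd ℂ) s1 * (starRingEnd ℂ) s0) +
      (starRingEnd ℂ) γ * ((r : ℂ)^2 * (s0 + s1) +
        s0 * (starRingEnd ℂ) s0 * s1 + s1 * (starRingEnd ℂ) s1 * s0) = 0 := by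
    rw [h0, h1]
    calc _ = γ * (starRingEnd ℂ) u + (starRingEnd ℂ) γ * u := by rw [huc, hu]
    _ = 0 := hre
  -- key complex identity
  have E : ((γ - s0) * (γ - s1)) * (starRingEnd ℂ) ((γ - s0) * (γ - s1)) =
      ((γ + s0) * (γ + s1)) * (starRingEnd ℂ) ((γ + s0) * (γ + s1)) := by
    simp only [map_mul, map_sub, map_add]
    linear_combination (-2 : ℂ) * hre2 +
      (-2 * (γ * ((starRingEnd ℂ) s0 + (starRingEnd ℂ) s1) +
        (starRingEnd ℂ) γ * (s0 + s1))) * hγγ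
  have hn : Complex.normSq ((γ - s0) * (γ - s1)) = Complex.normSq ((γ + s0) * (γ + s1)) := by
    have := E
    rw [Complex.mul_conj, Complex.mul_conj] at this
    exact_mod_cast this
  rw [← norm_mul, ← norm_mul, Complex.norm_def, Complex.norm_def, hn]
end
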